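/- arXiv:1801.09850 — 2 statements merged into one kernel-verified Lean document; each statement's English description precedes it below -/
import Mathlib

section
/- If x* is a solution of A ⊠ x = b with minimum support cardinality |supp(x*)|, then the collection {I_j : j ∈ J_{x*}}, where J_{x*} = {j : x*_j = x̄_j}, is a minimum-cardinality set cover of {1,…,m} by the sets I_j, and |J_{x*}| = |supp(x*)|. -/
open scoped Classical
open Finset

/-- Max-plus matrix-vector product: `(A ⊠ x) i = max_j (A i j + x j)`. -/
noncomputable def mpMul {m n : ℕ} (A : Fin m → Fin n → EReal) (x : Fin n → EReal) :
    Fin m → EReal := fun i => ⨆ j, A i j + x j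

/-- Principal solution `x̄ j = min_i (b i − A i j)`. -/
noncomputable def principal {m n : ℕ} (A : Fin m → Fin n → EReal) (b : Fin m → ℝ) :
    Fin n → EReal := fun j => ⨅ i, (b i : EReal) - A i j

/-- Every row and every column of `A` has a finite entry. -/
def DoublyAstic {m n : ℕ} (A : Fin m → Fin n → EReal) : Prop :=
  (∀ i, ∃ j, A i j ≠ ⊥) ∧ (∀ j, ∃ i, A i j ≠ ⊥)

/-- All entries lie in ℝ_max = ℝ ∪ {−∞}, i.e. are not +∞. -/
def RmaxMat {m n : ℕ} (A : Fin m → Fin n → EReal) : Prop := ∀ i j, A i j ≠ ⊤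

def RmaxVec {n : ℕ} (x : Fin n → EReal) : Prop := ∀ j, x j ≠ ⊤

/-- Support: indices of finite (non-bottom) components. -/
def supp {n : ℕ} (x : Fin n → EReal) : Set (Fin n) := {j | x j ≠ ⊥}

/-- ℓ₁ residual error `Σ_i (b i − (A ⊠ x) i)` (nonnegative under the lateness constraint). -/
noncomputable def err1 {m n : ℕ} (A : Fin m → Fin n → EReal) (b : Fin m → ℝ)
    (x : Fin n → EReal) : EReal := ∑ i, ((b i : EReal) - mpMul A x i)

/-! ### Auxiliary lemmas -/

lemma ereal_add_sub (a : EReal) (ha : a ≠ ⊥) (ha' : a ≠ ⊤) (b : ℝ) :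
    a + ((b : EReal) - a) = (b : EReal) := by
  induction a with
  | bot => exact absurd rfl ha
  | coe r => rw [← EReal.coe_sub]; norm_cast; ring
  | top => exact absurd rfl ha'

lemma ereal_le_sub_of_add_le {a x : EReal} {b : ℝ} (h : a + x ≤ (b : EReal)) :
    x ≤ (b : EReal) - a := by
  rcases eq_or_ne a ⊥ with rfl | ha
  · rw [EReal.coe_sub_bot]; exact le_top
  · rw [EReal.le_sub_iff_add_le (Or.inl ha) (Or.inr (EReal.coe_ne_top b)), add_comm]
    exact h

lemma ereal_eq_sub_of_add_eq {a x : EReal} {b : ℝ} (ha' : a ≠ ⊤) (hx' : x ≠ ⊤)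
    (h : a + x = (b : EReal)) : a ≠ ⊥ ∧ x ≠ ⊥ ∧ x = (b : EReal) - a := by
  rcases eq_or_ne a ⊥ with rfl | ha
  · rw [EReal.bot_add] at h; exact absurd h.symm (EReal.coe_ne_bot b)
  rcases eq_or_ne x ⊥ with rfl | hx
  · rw [EReal.add_bot] at h; exact absurd h.symm (EReal.coe_ne_bot b)
  refine ⟨ha, hx, ?_⟩
  lift a to ℝ using ⟨ha', ha⟩
  lift x to ℝ using ⟨hx', hx⟩
  rw [← EReal.coe_sub]
  norm_cast
  norm_cast at h
  linarith

lemma ereal_sub_ne_bot (b : ℝ) {a : EReal} (ha' : a ≠ ⊤) : (b : EReal) - a ≠ ⊥ := by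
  induction a with
  | bot => rw [EReal.coe_sub_bot]; exact top_ne_bot
  | coe r => rw [← EReal.coe_sub]; exact EReal.coe_ne_bot _
  | top => exact absurd rfl ha'

lemma ereal_sub_ne_top (b : ℝ) {a : EReal} (ha : a ≠ ⊥) : (b : EReal) - a ≠ ⊤ := by
  induction a with
  | bot => exact absurd rfl ha
  | coe r => rw [← EReal.coe_sub]; exact EReal.coe_ne_top _
  | top => rw [EReal.sub_top]; exact bot_ne_top

/-- Any solution is dominated by the principal solution. -/
lemma sol_le_principal {m n : ℕ} {A : Fin m → Fin n → EReal} {b : Fin m → ℝ}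
    {x : Fin n → EReal} (hsol : ∀ i, mpMul A x i = (b i : EReal)) (j : Fin n) :
    x j ≤ principal A b j := by
  refine le_iInf fun i => ereal_le_sub_of_add_le ?_
  calc A i j + x j ≤ ⨆ k, A i k + x k := le_iSup (fun k => A i k + x k) j
    _ = (b i : EReal) := hsol i

lemma principal_ne_bot {m n : ℕ} {A : Fin m → Fin n → EReal} {b : Fin m → ℝ}
    (hA : RmaxMat A) (j : Fin n) : principal A b j ≠ ⊥ := by
  rcases Nat.eq_zero_or_pos m with hm | hm
  · subst hm
    simp [principal, iInf_of_empty]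
  · haveI : Nonempty (Fin m) := ⟨⟨0, hm⟩⟩
    obtain ⟨i0, hi0⟩ := Finite.exists_min (fun i => (b i : EReal) - A i j)
    have heq : principal A b j = (b i0 : EReal) - A i0 j :=
      le_antisymm (iInf_le _ i0) (le_iInf hi0)
    rw [heq]
    exact ereal_sub_ne_bot _ (hA i0 j)

lemma principal_ne_top {m n : ℕ} {A : Fin m → Fin n → EReal} {b : Fin m → ℝ}
    (hastic : DoublyAstic A) (j : Fin n) : principal A b j ≠ ⊤ := by
  obtain ⟨i, hi⟩ := hastic.2 j
  have h1 : principal A b j ≤ (b i : EReal) - A i j := iInf_le _ i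
  exact fun h => ereal_sub_ne_top (b i) hi (top_le_iff.mp (h ▸ h1))

/-- The principal solution is a subsolution. -/
lemma principal_subsol {m n : ℕ} {A : Fin m → Fin n → EReal} {b : Fin m → ℝ}
    (hA : RmaxMat A) (i : Fin m) (j : Fin n) :
    A i j + principal A b j ≤ (b i : EReal) := by
  rcases eq_or_ne (A i j) ⊥ with hb | hb
  · rw [hb, EReal.bot_add]; exact bot_le
  · calc A i j + principal A b j ≤ A i j + ((b i : EReal) - A i j) :=
        add_le_add_right (iInf_le _ i) _
      _ = (b i : EReal) := ereal_add_sub _ hb (hA i j) _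

/-- At every row, a solution attains the equation at some index where it agrees
with the principal solution. -/
lemma key_attain {m n : ℕ} {A : Fin m → Fin n → EReal} {b : Fin m → ℝ}
    (hA : RmaxMat A) {x : Fin n → EReal} (hx : RmaxVec x)
    (hsol : ∀ i, mpMul A x i = (b i : EReal)) (i : Fin m) :
    ∃ j, x j ≠ ⊥ ∧ x j = principal A b j ∧ (b i : EReal) - A i j = principal A b j ∧
      A i j + x j = (b i : EReal) := by
  rcases Nat.eq_zero_or_pos n with hn | hn
  · exfalso
    have := hsol i
    subst hn
    simp [mpMul, iSup_of_empty] at this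
  haveI : Nonempty (Fin n) := ⟨⟨0, hn⟩⟩
  obtain ⟨j0, hj0⟩ := Finite.exists_max (fun j => A i j + x j)
  have hsup : (⨆ j, A i j + x j) = A i j0 + x j0 :=
    le_antisymm (iSup_le hj0) (le_iSup (fun j => A i j + x j) j0)
  have heq : A i j0 + x j0 = (b i : EReal) := by rw [← hsup]; exact hsol i
  obtain ⟨hAne, hxne, hxeq⟩ := ereal_eq_sub_of_add_eq (hA i j0) (hx j0) heq
  have hle : x j0 ≤ principal A b j0 := sol_le_principal hsol j0
  have h2 : principal A b j0 ≤ (b i : EReal) - A i j0 := iInf_le _ i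
  have hxP : x j0 = principal A b j0 := le_antisymm hle (by rw [hxeq]; exact h2)
  exact ⟨j0, hxne, hxP, by rw [← hxeq]; exact hxP, heq⟩

/-- the agreement set of a sparsest solution gives a minimum set cover, and
its cardinality equals that of the support. -/
theorem stmt6 {m n : ℕ} (A : Fin m → Fin n → EReal) (b : Fin m → ℝ)
    (hA : RmaxMat A) (hastic : DoublyAstic A)
    (xs : Fin n → EReal) (hxs : RmaxVec xs)
    (hsolx : ∀ i, mpMul A xs i = (b i : EReal))
    (hmin : ∀ x : Fin n → EReal, RmaxVec x → (∀ i, mpMul A x i = (b i : EReal)) →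
      (supp xs).ncard ≤ (supp x).ncard) :
    (∀ i, ∃ j ∈ {j : Fin n | xs j = principal A b j},
        (b i : EReal) - A i j = principal A b j) ∧
    {j : Fin n | xs j = principal A b j}.ncard = (supp xs).ncard ∧
    (∀ K : Finset (Fin n), (∀ i, ∃ j ∈ K, (b i : EReal) - A i j = principal A b j) →
      {j : Fin n | xs j = principal A b j}.ncard ≤ K.card) := by
  -- The agreement set equals the support
  have hJ : {j : Fin n | xs j = principal A b j} = supp xs := by
    ext j
    simp only [Set.mem_setOf_eq, supp]
    constructor
    · intro hj
      rw [hj]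
      exact principal_ne_bot hA j
    · intro hj
      by_contra hne
      -- drop coordinate j; still a solution with smaller support
      set x' : Fin n → EReal := fun k => if k = j then ⊥ else xs k with hx'def
      have hx' : RmaxVec x' := by
        intro k
        simp only [hx'def]
        split
        · exact bot_ne_top
        · exact hxs k
      have hsol' : ∀ i, mpMul A x' i = (b i : EReal) := by
        intro i
        refine le_antisymm (iSup_le fun k => ?_) ?_
        · have h1 : x' k ≤ xs k := by
            simp only [hx'def]; split
            · exact bot_le
            · exact le_refl _
          calc A i k + x' k ≤ A i k + xs k := add_le_add_right h1 _
            _ ≤ ⨆ l, A i l + xs l := le_iSup (fun l => A i l + xs l) k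
            _ = (b i : EReal) := hsolx i
        · obtain ⟨j0, _, hj0eq, _, hj0sol⟩ := key_attain hA hxs hsolx i
          have hj0j : j0 ≠ j := fun h => hne (h ▸ hj0eq)
          have : A i j0 + x' j0 = (b i : EReal) := by
            simp only [hx'def, if_neg hj0j]
            exact hj0sol
          rw [← this]
          exact le_iSup (fun l => A i l + x' l) j0
      have hsupp' : supp x' = supp xs \ {j} := by
        ext k
        simp only [supp, Set.mem_setOf_eq, Set.mem_diff, Set.mem_singleton_iff, hx'def]
        by_cases hk : k = j <;> simp [hk]
      have hlt : (supp x').ncard < (supp xs).ncard := by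
        rw [hsupp']
        exact Set.ncard_diff_singleton_lt_of_mem hj (Set.toFinite _)
      exact absurd (hmin x' hx' hsol') (not_le.mpr hlt)
  refine ⟨?_, by rw [hJ], ?_⟩
  · intro i
    obtain ⟨j0, _, hj0eq, hj0cov, _⟩ := key_attain hA hxs hsolx i
    exact ⟨j0, hj0eq, hj0cov⟩
  · intro K hK
    -- restrict the principal solution to K
    set xK : Fin n → EReal := fun k => if k ∈ K then principal A b k else ⊥ with hxKdef
    have hxK : RmaxVec xK := by
      intro k
      simp only [hxKdef]
      split
      · exact principal_ne_top hastic k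
      · exact bot_ne_top
    have hsolK : ∀ i, mpMul A xK i = (b i : EReal) := by
      intro i
      refine le_antisymm (iSup_le fun k => ?_) ?_
      · have h1 : xK k ≤ principal A b k := by
          simp only [hxKdef]; split
          · exact le_refl _
          · exact bot_le
        calc A i k + xK k ≤ A i k + principal A b k := add_le_add_right h1 _
          _ ≤ (b i : EReal) := principal_subsol hA i k
      · obtain ⟨j, hjK, hjcov⟩ := hK i
        have hAb : A i j ≠ ⊥ := by
          intro h
          rw [h, EReal.coe_sub_bot] at hjcov
          exact principal_ne_top hastic j hjcov.symm
        have : A i j + xK j = (b i : EReal) := by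
          simp only [hxKdef, if_pos hjK]
          rw [← hjcov]
          exact ereal_add_sub _ hAb (hA i j) _
        rw [← this]
        exact le_iSup (fun l => A i l + xK l) j
    have hsub : supp xK ⊆ (K : Set (Fin n)) := by
      intro k hk
      simp only [supp, Set.mem_setOf_eq, hxKdef] at hk
      by_contra hkK
      simp only [Finset.mem_coe] at hkK
      rw [if_neg hkK] at hk
      exact hk rfl
    calc {j : Fin n | xs j = principal A b j}.ncard = (supp xs).ncard := by rw [hJ]
      _ ≤ (supp xK).ncard := hmin xK hxK hsolK
      _ ≤ (K : Set (Fin n)).ncard := Set.ncard_le_ncard hsub K.finite_toSet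
      _ = K.card := Set.ncard_coe_finset K
end

section
/- Big-M equivalence: for M > ε ≥ 0 and Â(M) as defined, a vector x ∈ ℝ_max^n satisfies both ‖b − A ⊠ x‖₁ ≤ ε and A ⊠ x ≤ b if and only if it satisfies both ‖b − Â(M) ⊠ x‖₁ ≤ ε and Â(M) ⊠ x ≤ b. Hence the two sparsest-approximate-solution problems have the same feasible sets and the same optimal solutions. -/
open scoped Classical
open Finset

/-- The big-M modification of `A`: infinite entries replaced by `−M + b i − x̄ j`. -/
noncomputable def bigM {m n : ℕ} (A : Fin m → Fin n → EReal) (b : Fin m → ℝ) (M : ℝ) :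
    Fin m → Fin n → EReal :=
  fun i j => if A i j = ⊥ then (b i : EReal) - (M : EReal) - principal A b j else A i j

section Aux

variable {m n : ℕ}

lemma exists_real_of_ne {x : EReal} (h1 : x ≠ ⊥) (h2 : x ≠ ⊤) : ∃ r : ℝ, x = (r : EReal) := by
  induction x using EReal.rec with
  | bot => exact absurd rfl h1
  | coe r => exact ⟨r, rfl⟩
  | top => exact absurd rfl h2

lemma principal_real (A : Fin m → Fin n → EReal) (b : Fin m → ℝ) (hA : RmaxMat A)
    (hastic : DoublyAstic A) (j : Fin n) : ∃ r : ℝ, principal A b j = (r : EReal) := by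
  obtain ⟨i₀, hi₀⟩ := hastic.2 j
  have hne : Nonempty (Fin m) := ⟨i₀⟩
  obtain ⟨imin, himin⟩ := Finite.exists_min (fun i => (b i : EReal) - A i j)
  have heq : principal A b j = (b imin : EReal) - A imin j :=
    le_antisymm (iInf_le _ _) (le_iInf himin)
  obtain ⟨a₀, ha₀⟩ := exists_real_of_ne hi₀ (hA i₀ j)
  have hlt : (b imin : EReal) - A imin j < ⊤ := by
    refine lt_of_le_of_lt (himin i₀) ?_
    rw [ha₀, ← EReal.coe_sub]
    exact EReal.coe_lt_top _
  have hbot : A imin j ≠ ⊥ := by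
    intro hb
    rw [hb, EReal.coe_sub_bot] at hlt
    exact lt_irrefl _ hlt
  obtain ⟨a, ha⟩ := exists_real_of_ne hbot (hA imin j)
  refine ⟨b imin - a, ?_⟩
  rw [heq, ha, ← EReal.coe_sub]

lemma A_le_bigM (A : Fin m → Fin n → EReal) (b : Fin m → ℝ) (M : ℝ) (i : Fin m) (j : Fin n) :
    A i j ≤ bigM A b M i j := by
  unfold bigM
  split
  · next h => rw [h]; exact bot_le
  · exact le_rfl

lemma mpMul_mono {A B : Fin m → Fin n → EReal} (h : ∀ i j, A i j ≤ B i j) (x : Fin n → EReal)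
    (i : Fin m) : mpMul A x i ≤ mpMul B x i := by
  refine iSup_le fun j => le_trans ?_ (le_iSup (fun j => B i j + x j) j)
  exact add_le_add_left (h i j) _

lemma le_principal_of_le (A : Fin m → Fin n → EReal) (b : Fin m → ℝ) (hA : RmaxMat A)
    {x : Fin n → EReal} (hx : ∀ i, mpMul A x i ≤ (b i : EReal)) (j : Fin n) :
    x j ≤ principal A b j := by
  refine le_iInf fun i => ?_
  by_cases hb : A i j = ⊥
  · rw [hb, EReal.coe_sub_bot]; exact le_top
  · obtain ⟨a, ha⟩ := exists_real_of_ne hb (hA i j)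
    have h1 : A i j + x j ≤ (b i : EReal) :=
      le_trans (le_iSup (fun j => A i j + x j) j) (hx i)
    rw [ha] at h1 ⊢
    rw [EReal.le_sub_iff_add_le (Or.inl (EReal.coe_ne_bot a)) (Or.inl (EReal.coe_ne_top a))]
    rwa [add_comm] at h1

end Aux

/-- big-M equivalence of the feasible sets of the sparsest approximate
solution problems. -/
theorem stmt15 {m n : ℕ} (A : Fin m → Fin n → EReal) (b : Fin m → ℝ) (ε M : ℝ)
    (hε : 0 ≤ ε) (hM : ε < M) (hA : RmaxMat A) (hastic : DoublyAstic A) :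
    ∀ x : Fin n → EReal, RmaxVec x →
      ((err1 A b x ≤ (ε : EReal) ∧ ∀ i, mpMul A x i ≤ (b i : EReal)) ↔
        (err1 (bigM A b M) b x ≤ (ε : EReal) ∧
          ∀ i, mpMul (bigM A b M) x i ≤ (b i : EReal))) := by
  intro x hx
  set Ah := bigM A b M with hAhdef
  have hle : ∀ i j, A i j ≤ Ah i j := A_le_bigM A b M
  have hmono : ∀ i, mpMul A x i ≤ mpMul Ah x i := mpMul_mono hle x
  have hAhreal : ∀ i j, ∃ r : ℝ, Ah i j = (r : EReal) := by
    intro i j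
    by_cases hb : A i j = ⊥
    · obtain ⟨p, hp⟩ := principal_real A b hA hastic j
      refine ⟨b i - M - p, ?_⟩
      rw [hAhdef]; unfold bigM; rw [if_pos hb, hp]
      push_cast; rfl
    · obtain ⟨a, ha⟩ := exists_real_of_ne hb (hA i j)
      refine ⟨a, ?_⟩
      rw [hAhdef]; unfold bigM; rw [if_neg hb, ha]
  have hAhRmax : RmaxMat Ah := by
    intro i j
    obtain ⟨r, hr⟩ := hAhreal i j
    rw [hr]; exact EReal.coe_ne_top r
  have hAh_eq : ∀ i j, A i j = ⊥ → ∀ p : ℝ, principal A b j = (p : EReal) →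
      Ah i j = ((b i - M - p : ℝ) : EReal) := by
    intro i j hb p hp
    rw [hAhdef]; unfold bigM; rw [if_pos hb, hp]
    push_cast; rfl
  have hAh_eq' : ∀ i j, A i j ≠ ⊥ → Ah i j = A i j := by
    intro i j hb
    rw [hAhdef]; unfold bigM; rw [if_neg hb]
  -- the key bound on a big-M term, given `x j ≤ principal A b j`
  have hbigM_term : ∀ (i : Fin m) (j : Fin n), A i j = ⊥ → x j ≤ principal A b j →
      Ah i j + x j ≤ ((b i - M : ℝ) : EReal) := by
    intro i j hb hxj
    obtain ⟨p, hp⟩ := principal_real A b hA hastic j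
    rw [hAh_eq i j hb p hp]
    calc ((b i - M - p : ℝ) : EReal) + x j ≤ ((b i - M - p : ℝ) : EReal) + (p : EReal) :=
          add_le_add_right (hp ▸ hxj) _
      _ = ((b i - M : ℝ) : EReal) := by norm_cast; ring
  constructor
  · rintro ⟨h1, h2⟩
    have hxp : ∀ j, x j ≤ principal A b j := le_principal_of_le A b hA h2
    have hAhb : ∀ i, mpMul Ah x i ≤ (b i : EReal) := by
      intro i
      refine iSup_le fun j => ?_
      by_cases hb : A i j = ⊥
      · refine le_trans (hbigM_term i j hb (hxp j)) ?_
        exact_mod_cast (by linarith : b i - M ≤ b i)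
      · rw [hAh_eq' i j hb]
        exact le_trans (le_iSup (fun j => A i j + x j) j) (h2 i)
    refine ⟨le_trans ?_ h1, hAhb⟩
    exact Finset.sum_le_sum fun i _ => EReal.sub_le_sub le_rfl (hmono i)
  · rintro ⟨h1, h2⟩
    have hAxb : ∀ i, mpMul A x i ≤ (b i : EReal) := fun i => le_trans (hmono i) (h2 i)
    refine ⟨?_, hAxb⟩
    have hxp : ∀ j, x j ≤ principal A b j := by
      intro j
      refine le_trans (le_principal_of_le Ah b hAhRmax h2 j) ?_
      exact iInf_mono fun i => EReal.sub_le_sub le_rfl (hle i j)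
    have hkey : ∀ i, mpMul Ah x i ≤ mpMul A x i := by
      intro i
      -- each residual term is nonnegative
      have hterm : ∀ k, (0 : EReal) ≤ (b k : EReal) - mpMul Ah x k := by
        intro k
        have : (b k : EReal) - (b k : EReal) ≤ (b k : EReal) - mpMul Ah x k :=
          EReal.sub_le_sub le_rfl (h2 k)
        calc (0 : EReal) = (b k : EReal) - (b k : EReal) := by norm_cast; simp
          _ ≤ _ := this
      have hsingle : (b i : EReal) - mpMul Ah x i ≤ (ε : EReal) := by
        refine le_trans ?_ h1
        exact Finset.single_le_sum (fun k _ => hterm k) (Finset.mem_univ i)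
      have hlow : (b i : EReal) - (ε : EReal) ≤ mpMul Ah x i := by
        have h3 : (b i : EReal) ≤ (ε : EReal) + mpMul Ah x i :=
          (EReal.sub_le_iff_le_add (Or.inr (EReal.coe_ne_top ε))
            (Or.inr (EReal.coe_ne_bot ε))).1 hsingle
        exact EReal.sub_le_of_le_add' h3
      have hgt : ((b i - M : ℝ) : EReal) < mpMul Ah x i := by
        refine lt_of_lt_of_le ?_ hlow
        rw [← EReal.coe_sub]
        exact_mod_cast (by linarith : b i - M < b i - ε)
      have hmax : mpMul Ah x i ≤ max (mpMul A x i) ((b i - M : ℝ) : EReal) := by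
        refine iSup_le fun j => ?_
        by_cases hb : A i j = ⊥
        · exact le_trans (hbigM_term i j hb (hxp j)) (le_max_right _ _)
        · rw [hAh_eq' i j hb]
          exact le_trans (le_iSup (fun j => A i j + x j) j) (le_max_left _ _)
      rcases le_or_gt (mpMul Ah x i) (mpMul A x i) with h | h
      · exact h
      · exact absurd hmax (not_le.2 (max_lt h hgt))
    refine le_trans ?_ h1
    exact Finset.sum_le_sum fun i _ => EReal.sub_le_sub le_rfl (hkey i)
end
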